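/- Prototype A sketch-to-sketch similarity, case (i) (unrelated sketches are dissimilar): There exist constants C ≥ 1 and c > 0 such that the following holds. Let N ≥ 2, d ≥ 1, let R₁, …, R_N be independent Haar-random elements of O(d), let A and Ā be disjoint subsets of {1,…,N}, let xᵢ (i ∈ A) and x̄ᵢ (i ∈ Ā) be unit vectors in ℝ^d, and let wᵢ ≥ 0 (i ∈ A) and w̄ᵢ ≥ 0 (i ∈ Ā) each sum to 1. Set s = Σ_{i∈A} wᵢRᵢxᵢ and s̄ = Σ_{i∈Ā} w̄ᵢRᵢx̄ᵢ. Then Pr[ |⟨s, s̄⟩| > C·√(log N)/√d ] ≤ N^{−c}. -/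

import Mathlib

open MeasureTheory Matrix

noncomputable instance (d : ℕ) : MeasurableSpace (Matrix.orthogonalGroup (Fin d) ℝ) :=
  borel _

instance (d : ℕ) : BorelSpace (Matrix.orthogonalGroup (Fin d) ℝ) := ⟨rfl⟩

/-- The squared Euclidean norm `‖v‖²` on `ℝ^d`. -/
def sqNorm {d : ℕ} (v : Fin d → ℝ) : ℝ := ∑ i, v i ^ 2

/-- The standard inner product on `ℝ^d`. -/
def ip {d : ℕ} (v w : Fin d → ℝ) : ℝ := ∑ i, v i * w i

abbrev OG (d : ℕ) := Matrix.orthogonalGroup (Fin d) ℝ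

instance (d : ℕ) : MeasurableMul (OG d) := by
  constructor
  · intro a
    have h : Continuous fun R : OG d => ((a * R : OG d) : Matrix (Fin d) (Fin d) ℝ) := by
      simpa using (continuous_const.matrix_mul continuous_subtype_val)
    exact (continuous_induced_rng.2 h).measurable
  · intro a
    have h : Continuous fun R : OG d => ((R * a : OG d) : Matrix (Fin d) (Fin d) ℝ) := by
      simpa using (continuous_subtype_val.matrix_mul continuous_const)
    exact (continuous_induced_rng.2 h).measurable

variable {d : ℕ}

lemma measurable_entry (i j : Fin d) : Measurable fun R : OG d => (R : Matrix (Fin d) (Fin d) ℝ) i j := by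
  have : Continuous fun R : OG d => (R : Matrix (Fin d) (Fin d) ℝ) i j := by
    exact ((continuous_apply j).comp ((continuous_apply i).comp continuous_subtype_val))
  exact this.measurable

lemma measurable_z (u : Fin d → ℝ) (l : Fin d) :
    Measurable fun R : OG d => ((R : Matrix (Fin d) (Fin d) ℝ).mulVec u) l := by
  simp only [Matrix.mulVec, dotProduct]
  exact Finset.measurable_sum _ fun j _ => (measurable_entry l j).mul measurable_const

lemma inv_int (μ : Measure (OG d)) [μ.IsHaarMeasure] (u : Fin d → ℝ) (Q : OG d)
    (f : (Fin d → ℝ) → ℝ) :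
    ∫ R : OG d, f ((Q : Matrix (Fin d) (Fin d) ℝ).mulVec ((R : Matrix (Fin d) (Fin d) ℝ).mulVec u)) ∂μ
      = ∫ R : OG d, f ((R : Matrix (Fin d) (Fin d) ℝ).mulVec u) ∂μ := by
  have h := integral_mul_left_eq_self (μ := μ) (fun R : OG d => f ((R : Matrix (Fin d) (Fin d) ℝ).mulVec u)) Q
  simpa [Matrix.mulVec_mulVec] using h



variable {d : ℕ}

def pairRow (a b : Fin d) (c1 c2 : ℝ) : Fin d → ℝ :=
  fun l => if l = a then c1 else if l = b then c2 else 0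

def deltaRow (i : Fin d) : Fin d → ℝ := fun l => if l = i then 1 else 0

lemma sum_pairRow_pairRow {a b : Fin d} (hab : a ≠ b) (c1 c2 e1 e2 : ℝ) :
    (∑ l, pairRow a b c1 c2 l * pairRow a b e1 e2 l) = c1 * e1 + c2 * e2 := by
  have h : ∀ l, pairRow a b c1 c2 l * pairRow a b e1 e2 l
      = (if l = a then c1 * e1 else 0) + (if l = b then c2 * e2 else 0) := by
    intro l
    unfold pairRow
    rcases eq_or_ne l a with rfl | h1
    · simp [hab]
    · simp only [if_neg h1]
      rcases eq_or_ne l b with rfl | h2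
      · simp
      · simp [h2]
  simp [h, Finset.sum_add_distrib]

lemma sum_pairRow_delta {a b : Fin d} (c1 c2 : ℝ) (i : Fin d) :
    (∑ l, pairRow a b c1 c2 l * deltaRow i l) = pairRow a b c1 c2 i := by
  have h : ∀ l, pairRow a b c1 c2 l * deltaRow i l
      = if l = i then pairRow a b c1 c2 i else 0 := by
    intro l
    unfold deltaRow
    rcases eq_or_ne l i with rfl | h1
    · simp
    · simp [h1]
  simp [h]

lemma sum_delta_pairRow {a b : Fin d} (c1 c2 : ℝ) (i : Fin d) :
    (∑ l, deltaRow i l * pairRow a b c1 c2 l) = pairRow a b c1 c2 i := by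
  rw [Finset.sum_congr rfl fun l _ => mul_comm _ _]; exact sum_pairRow_delta c1 c2 i

lemma sum_delta_delta (i i' : Fin d) :
    (∑ l, deltaRow i l * deltaRow i' l) = if i = i' then 1 else 0 := by
  have h : ∀ l, deltaRow i l * deltaRow i' l = if l = i then deltaRow i' i else 0 := by
    intro l
    unfold deltaRow
    rcases eq_or_ne l i with rfl | h1
    · simp
    · simp [h1]
  rw [Finset.sum_congr rfl fun l _ => h l]
  rcases eq_or_ne i i' with rfl | h2
  · simp [deltaRow]
  · simp [deltaRow, h2, Ne.symm h2]

/-- rotation in the (a,b) coordinate plane -/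
noncomputable def rotM (a b : Fin d) (θ : ℝ) : Fin d → Fin d → ℝ := fun i =>
  if i = a then pairRow a b (Real.cos θ) (-Real.sin θ)
  else if i = b then pairRow a b (Real.sin θ) (Real.cos θ)
  else deltaRow i

lemma mem_OG_of_rows (b : Fin d → Fin d → ℝ)
    (h : ∀ i i', (∑ l, b i l * b i' l) = if i = i' then 1 else 0) :
    Matrix.of b ∈ Matrix.orthogonalGroup (Fin d) ℝ := by
  rw [Matrix.mem_orthogonalGroup_iff]
  ext i i'
  simpa [Matrix.mul_apply, Matrix.star_eq_conjTranspose, Matrix.conjTranspose_apply,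
    Matrix.one_apply] using h i i'

lemma rotM_mem {a b : Fin d} (hab : a ≠ b) (θ : ℝ) :
    Matrix.of (rotM a b θ) ∈ Matrix.orthogonalGroup (Fin d) ℝ := by
  apply mem_OG_of_rows
  intro i i'
  have hc : Real.sin θ ^ 2 + Real.cos θ ^ 2 = 1 := Real.sin_sq_add_cos_sq θ
  by_cases hia : i = a
  · have row_i : rotM a b θ i = pairRow a b (Real.cos θ) (-Real.sin θ) := by simp [rotM, hia]
    by_cases hi'a : i' = a
    · have row_i' : rotM a b θ i' = pairRow a b (Real.cos θ) (-Real.sin θ) := by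
        simp [rotM, hi'a]
      have hii' : i = i' := by rw [hia, hi'a]
      rw [row_i, row_i', sum_pairRow_pairRow hab, if_pos hii']
      nlinarith
    · by_cases hi'b : i' = b
      · have row_i' : rotM a b θ i' = pairRow a b (Real.sin θ) (Real.cos θ) := by
          simp [rotM, hi'b, Ne.symm hab]
        have hii' : i ≠ i' := by rw [hia, hi'b]; exact hab
        rw [row_i, row_i', sum_pairRow_pairRow hab, if_neg hii']
        ring
      · have row_i' : rotM a b θ i' = deltaRow i' := by simp [rotM, hi'a, hi'b, Ne.symm hab]
        have hii' : i ≠ i' := by rw [hia]; exact Ne.symm hi'a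
        rw [row_i, row_i', sum_pairRow_delta, if_neg hii']
        simp [pairRow, hi'a, hi'b]
  · by_cases hib : i = b
    · have row_i : rotM a b θ i = pairRow a b (Real.sin θ) (Real.cos θ) := by
        simp [rotM, hia, hib, Ne.symm hab]
      by_cases hi'a : i' = a
      · have row_i' : rotM a b θ i' = pairRow a b (Real.cos θ) (-Real.sin θ) := by
          simp [rotM, hi'a]
        have hii' : i ≠ i' := by rw [hib, hi'a]; exact Ne.symm hab
        rw [row_i, row_i', sum_pairRow_pairRow hab, if_neg hii']
        ring
      · by_cases hi'b : i' = b
        · have row_i' : rotM a b θ i' = pairRow a b (Real.sin θ) (Real.cos θ) := by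
            simp [rotM, hi'a, hi'b, Ne.symm hab]
          have hii' : i = i' := by rw [hib, hi'b]
          rw [row_i, row_i', sum_pairRow_pairRow hab, if_pos hii']
          nlinarith
        · have row_i' : rotM a b θ i' = deltaRow i' := by simp [rotM, hi'a, hi'b, Ne.symm hab]
          have hii' : i ≠ i' := by rw [hib]; exact Ne.symm hi'b
          rw [row_i, row_i', sum_pairRow_delta, if_neg hii']
          simp [pairRow, hi'a, hi'b]
    · have row_i : rotM a b θ i = deltaRow i := by simp [rotM, hia, hib, Ne.symm hab]
      by_cases hi'a : i' = a
      · have row_i' : rotM a b θ i' = pairRow a b (Real.cos θ) (-Real.sin θ) := by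
          simp [rotM, hi'a]
        have hii' : i ≠ i' := by rw [hi'a]; exact hia
        rw [row_i, row_i', sum_delta_pairRow, if_neg hii']
        simp [pairRow, hia, hib]
      · by_cases hi'b : i' = b
        · have row_i' : rotM a b θ i' = pairRow a b (Real.sin θ) (Real.cos θ) := by
            simp [rotM, hi'a, hi'b, Ne.symm hab]
          have hii' : i ≠ i' := by rw [hi'b]; exact hib
          rw [row_i, row_i', sum_delta_pairRow, if_neg hii']
          simp [pairRow, hia, hib]
        · have row_i' : rotM a b θ i' = deltaRow i' := by simp [rotM, hi'a, hi'b, Ne.symm hab]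
          rw [row_i, row_i', sum_delta_delta]

lemma inner_euclidean (x y : EuclideanSpace ℝ (Fin d)) :
    (inner ℝ x y : ℝ) = ∑ l, x l * y l := by
  rw [PiLp.inner_apply]
  simp only [RCLike.inner_apply, starRingEnd_apply, star_trivial]
  exact Finset.sum_congr rfl fun l _ => mul_comm _ _

lemma exists_row_mem [NeZero d] (v : Fin d → ℝ) (hv : sqNorm v = 1) :
    ∃ Q : Matrix (Fin d) (Fin d) ℝ, Q ∈ Matrix.orthogonalGroup (Fin d) ℝ ∧ ∀ l, Q 0 l = v l := by
  classical
  let v' : EuclideanSpace ℝ (Fin d) := WithLp.toLp 2 v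
  have hvv : (inner ℝ v' v' : ℝ) = 1 := by
    rw [inner_euclidean]
    rw [show (∑ l, v' l * v' l) = sqNorm v by unfold sqNorm; congr 1; ext l; ring]
    exact hv
  have hon : Orthonormal ℝ (({0} : Set (Fin d)).restrict (fun _ : Fin d => v')) := by
    rw [orthonormal_iff_ite]
    intro i j
    have hij : i = j := Subtype.ext (by rw [show (i : Fin d) = 0 from i.2, show (j : Fin d) = 0 from j.2])
    rw [if_pos hij, hij]
    exact hvv
  obtain ⟨b, hb⟩ := hon.exists_orthonormalBasis_extension_of_card_eq
    (by simp [finrank_euclideanSpace])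
  have hb0 : b 0 = v' := hb 0 rfl
  refine ⟨Matrix.of (fun i l => b i l), mem_OG_of_rows _ ?_, ?_⟩
  · intro i i'
    have := (orthonormal_iff_ite.1 b.orthonormal) i i'
    rw [inner_euclidean] at this
    simpa using this
  · intro l
    simp [Matrix.of_apply, hb0, v']

lemma mulVec_of_eval (rows : Fin d → Fin d → ℝ) (y : Fin d → ℝ) (i : Fin d) :
    (Matrix.of rows).mulVec y i = ∑ l, rows i l * y l := by
  simp [Matrix.mulVec, dotProduct]

lemma pairRow_dot {a b : Fin d} (hab : a ≠ b) (c1 c2 : ℝ) (y : Fin d → ℝ) :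
    (∑ l, pairRow a b c1 c2 l * y l) = c1 * y a + c2 * y b := by
  have h : ∀ l, pairRow a b c1 c2 l * y l
      = (if l = a then c1 * y a else 0) + (if l = b then c2 * y b else 0) := by
    intro l
    unfold pairRow
    rcases eq_or_ne l a with rfl | h1
    · simp [hab]
    · simp only [if_neg h1]
      rcases eq_or_ne l b with rfl | h2
      · simp
      · simp [h1, h2]
  simp [h, Finset.sum_add_distrib]

lemma ip_comm (v w : Fin d → ℝ) : ip v w = ip w v := by
  unfold ip; exact Finset.sum_congr rfl fun l _ => mul_comm _ _

lemma sqNorm_eq_dot (y : Fin d → ℝ) : sqNorm y = dotProduct y y := by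
  unfold sqNorm dotProduct
  exact Finset.sum_congr rfl fun l _ => sq (y l)

lemma sqNorm_mulVec {Q : Matrix (Fin d) (Fin d) ℝ}
    (hQ : Q ∈ Matrix.orthogonalGroup (Fin d) ℝ) (w : Fin d → ℝ) :
    sqNorm (Q.mulVec w) = sqNorm w := by
  have h1 : star Q * Q = 1 := (Matrix.mem_orthogonalGroup_iff' (n := Fin d) (R := ℝ)).1 hQ
  rw [sqNorm_eq_dot, sqNorm_eq_dot]
  calc dotProduct (Q.mulVec w) (Q.mulVec w)
      = dotProduct w ((star Q * Q).mulVec w) := by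
        rw [← Matrix.mulVec_mulVec]
        rw [Matrix.star_eq_conjTranspose, Matrix.conjTranspose_eq_transpose_of_trivial]
        rw [Matrix.mulVec_transpose, Matrix.dotProduct_mulVec]
        exact dotProduct_comm _ _
  _ = dotProduct w w := by rw [h1, Matrix.one_mulVec]

lemma abs_coord_le {y : Fin d → ℝ} (hy : sqNorm y = 1) (l : Fin d) : |y l| ≤ 1 := by
  have h1 : y l ^ 2 ≤ 1 := by
    rw [← hy]
    unfold sqNorm
    exact Finset.single_le_sum (f := fun i => y i ^ 2) (fun i _ => sq_nonneg _) (Finset.mem_univ l)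
  have h2 : y l * y l ≤ 1 := by nlinarith
  exact abs_le_one_iff_mul_self_le_one.2 h2

lemma abs_ip_le {y w : Fin d → ℝ} (hy : sqNorm y = 1) (hw : sqNorm w = 1) : |ip y w| ≤ 1 := by
  have h := Finset.sum_mul_sq_le_sq_mul_sq Finset.univ y w
  have hy' : (∑ i, y i ^ 2) = 1 := hy
  have hw' : (∑ i, w i ^ 2) = 1 := hw
  have h2 : ip y w * ip y w ≤ 1 := by
    have : ip y w ^ 2 ≤ 1 := by
      unfold ip; rw [hy', hw'] at h; simpa using h
    nlinarith
  exact abs_le_one_iff_mul_self_le_one.2 h2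

lemma integrable_bdd {α : Type*} [MeasurableSpace α] (μ : Measure α) [IsFiniteMeasure μ]
    {f : α → ℝ} (hm : Measurable f) {c : ℝ} (hb : ∀ x, |f x| ≤ c) : Integrable f μ :=
  (integrable_const c).mono' hm.aestronglyMeasurable (ae_of_all _ (by simpa using hb))

section Invariance
variable [NeZero d] {μ : Measure (OG d)} [μ.IsHaarMeasure] [IsProbabilityMeasure μ]

lemma rot_inv (u : Fin d → ℝ) {j : Fin d} (hj : (0 : Fin d) ≠ j) (θ : ℝ) (n : ℕ) :
    ∫ R : OG d, (Real.cos θ * ((R : Matrix (Fin d) (Fin d) ℝ).mulVec u 0)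
        - Real.sin θ * ((R : Matrix (Fin d) (Fin d) ℝ).mulVec u j)) ^ n ∂μ
      = ∫ R : OG d, ((R : Matrix (Fin d) (Fin d) ℝ).mulVec u 0) ^ n ∂μ := by
  have h := inv_int μ u ⟨Matrix.of (rotM 0 j θ), rotM_mem hj θ⟩ (fun y => (y 0) ^ n)
  rw [← h]
  apply integral_congr_ae
  apply ae_of_all
  intro R
  have : (Matrix.of (rotM 0 j θ)).mulVec ((R : Matrix (Fin d) (Fin d) ℝ).mulVec u) 0
      = Real.cos θ * ((R : Matrix (Fin d) (Fin d) ℝ).mulVec u 0)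
        - Real.sin θ * ((R : Matrix (Fin d) (Fin d) ℝ).mulVec u j) := by
    rw [mulVec_of_eval]
    rw [show rotM 0 j θ 0 = pairRow 0 j (Real.cos θ) (-Real.sin θ) by simp [rotM]]
    rw [pairRow_dot hj]
    ring
  simp only [this]

lemma ipv_inv (u : Fin d → ℝ) (v : Fin d → ℝ) (hv : sqNorm v = 1) (n : ℕ) :
    ∫ R : OG d, (ip ((R : Matrix (Fin d) (Fin d) ℝ).mulVec u) v) ^ n ∂μ
      = ∫ R : OG d, ((R : Matrix (Fin d) (Fin d) ℝ).mulVec u 0) ^ n ∂μ := by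
  obtain ⟨Q, hQ, hrow⟩ := exists_row_mem v hv
  have h := inv_int μ u ⟨Q, hQ⟩ (fun y => (y 0) ^ n)
  rw [← h]
  apply integral_congr_ae
  apply ae_of_all
  intro R
  have : Q.mulVec ((R : Matrix (Fin d) (Fin d) ℝ).mulVec u) 0
      = ip ((R : Matrix (Fin d) (Fin d) ℝ).mulVec u) v := by
    have : Q.mulVec ((R : Matrix (Fin d) (Fin d) ℝ).mulVec u) 0
        = ∑ l, Q 0 l * (R : Matrix (Fin d) (Fin d) ℝ).mulVec u l := by
      simp [Matrix.mulVec, dotProduct]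
    rw [this]
    rw [ip_comm]
    unfold ip
    exact Finset.sum_congr rfl fun l _ => by rw [hrow l]
  simp only [this]

end Invariance

lemma evensum (k : ℕ) (g : ℕ → ℝ) :
    ∑ m ∈ Finset.range (2*k+1), (if Even m then g m else 0)
      = ∑ l ∈ Finset.range (k+1), g (2*l) := by
  induction k with
  | zero => simp
  | succ n ih =>
    rw [show 2*(n+1)+1 = (2*n+1)+1+1 by ring]
    rw [Finset.sum_range_succ, Finset.sum_range_succ (n := 2*n+1), ih,
      Finset.sum_range_succ (n := n+1)]
    have h1 : ¬ Even (2*n+1) := by simp [Nat.even_add_one, Nat.even_mul]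
    have h2 : Even (2*n+1+1) := by simp [Nat.even_add_one, h1]
    rw [if_neg h1, if_pos h2]
    have : 2*n+1+1 = 2*(n+1) := by ring
    rw [this]
    ring

/-- the random vector `R x` -/
def zv {d : ℕ} (u : Fin d → ℝ) (R : OG d) : Fin d → ℝ :=
  (R : Matrix (Fin d) (Fin d) ℝ).mulVec u

section Ratio
set_option linter.unusedSectionVars false
variable [NeZero d] {μ : Measure (OG d)} [μ.IsHaarMeasure] [IsProbabilityMeasure μ]

lemma rot_inv' (u : Fin d → ℝ) {j : Fin d} (hj : (0 : Fin d) ≠ j) (θ : ℝ) (n : ℕ) :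
    ∫ R : OG d, (Real.cos θ * zv u R 0 - Real.sin θ * zv u R j) ^ n ∂μ
      = ∫ R : OG d, (zv u R 0) ^ n ∂μ := rot_inv u hj θ n

lemma zv_sqNorm {u : Fin d → ℝ} (hu : sqNorm u = 1) (R : OG d) : sqNorm (zv u R) = 1 := by
  rw [zv, sqNorm_mulVec R.2]; exact hu

lemma zv_abs_le {u : Fin d → ℝ} (hu : sqNorm u = 1) (R : OG d) (l : Fin d) :
    |zv u R l| ≤ 1 := abs_coord_le (zv_sqNorm hu R) l

lemma zv_meas (u : Fin d → ℝ) (l : Fin d) : Measurable fun R : OG d => zv u R l :=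
  measurable_z u l

lemma zv_int (u : Fin d → ℝ) (hu : sqNorm u = 1) (i1 i2 : Fin d) (p q : ℕ) :
    Integrable (fun R : OG d => (zv u R i1)^p * (zv u R i2)^q) μ := by
  apply integrable_bdd μ (((zv_meas u i1).pow_const p).mul ((zv_meas u i2).pow_const q)) (c := 1)
  intro R
  simp only [Pi.mul_apply]
  rw [abs_mul, abs_pow, abs_pow]
  exact mul_le_one₀ (pow_le_one₀ (abs_nonneg _) (zv_abs_le hu R i1))
    (pow_nonneg (abs_nonneg _) _) (pow_le_one₀ (abs_nonneg _) (zv_abs_le hu R i2))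

lemma ratio (u : Fin d → ℝ) (hu : sqNorm u = 1) {j : Fin d} (hj : (0 : Fin d) ≠ j)
    {k : ℕ} (hk : 1 ≤ k) :
    ((2*k : ℝ) - 1) * ∫ R : OG d, (zv u R 0)^(2*k-2) * (zv u R j)^2 ∂μ
      = ∫ R : OG d, (zv u R 0)^(2*k) ∂μ := by
  classical
  set W : ℕ → ℝ := fun m => ∫ R : OG d, (zv u R 0)^m * (zv u R j)^(2*k-m) ∂μ with hW
  set T : ℝ := ∫ R : OG d, (zv u R 0)^(2*k) ∂μ with hT
  have step : ∀ θ : ℝ, ∑ m ∈ Finset.range (2*k+1),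
      ((2*k).choose m : ℝ) * Real.cos θ ^ m * (-Real.sin θ) ^ (2*k-m) * W m = T := by
    intro θ
    rw [hT, ← rot_inv' (μ := μ) u hj θ (2*k)]
    have hpt : ∀ R : OG d, (Real.cos θ * zv u R 0 - Real.sin θ * zv u R j)^(2*k)
        = ∑ m ∈ Finset.range (2*k+1), ((2*k).choose m : ℝ) * Real.cos θ ^ m
            * (-Real.sin θ)^(2*k-m) * ((zv u R 0)^m * (zv u R j)^(2*k-m)) := by
      intro R
      rw [show Real.cos θ * zv u R 0 - Real.sin θ * zv u R j
          = Real.cos θ * zv u R 0 + (-Real.sin θ) * zv u R j by ring]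
      rw [add_pow]
      refine Finset.sum_congr rfl fun m hm => ?_
      rw [mul_pow, mul_pow]
      ring
    rw [integral_congr_ae (ae_of_all μ hpt)]
    rw [integral_finset_sum _ (fun m _ => ((zv_int u hu 0 j m (2*k-m)).const_mul _))]
    exact (Finset.sum_congr rfl fun m _ => (integral_const_mul _ _)).symm
  have step2 : ∀ θ : ℝ, ∑ l ∈ Finset.range (k+1),
      ((2*k).choose (2*l) : ℝ) * (Real.cos θ ^ 2) ^ l * (Real.sin θ ^ 2) ^ (k-l) * W (2*l)
        = T := by
    intro θ
    have hA := step θ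
    have hB := step (-θ)
    simp only [Real.cos_neg, Real.sin_neg, neg_neg] at hB
    have hAB : ∑ m ∈ Finset.range (2*k+1),
        (((2*k).choose m : ℝ) * Real.cos θ ^ m * ((-Real.sin θ)^(2*k-m)
          + Real.sin θ ^(2*k-m)) * W m) = 2*T := by
      have hsplit : ∀ m ∈ Finset.range (2*k+1),
          ((2*k).choose m : ℝ) * Real.cos θ ^ m * ((-Real.sin θ)^(2*k-m)
            + Real.sin θ ^(2*k-m)) * W m
          = ((2*k).choose m : ℝ) * Real.cos θ ^ m * (-Real.sin θ)^(2*k-m) * W m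
            + ((2*k).choose m : ℝ) * Real.cos θ ^ m * Real.sin θ ^(2*k-m) * W m := by
        intro m _; ring
      rw [Finset.sum_congr rfl hsplit, Finset.sum_add_distrib, hA, hB]
      ring
    have heo : ∀ m ∈ Finset.range (2*k+1),
        (((2*k).choose m : ℝ) * Real.cos θ ^ m * ((-Real.sin θ)^(2*k-m)
          + Real.sin θ ^(2*k-m)) * W m)
        = if Even m then 2*(((2*k).choose m : ℝ) * Real.cos θ ^ m
            * Real.sin θ ^(2*k-m) * W m) else 0 := by
      intro m hm
      have hmle : m ≤ 2*k := by
        have := Finset.mem_range.1 hm; omega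
      by_cases he : Even m
      · have hp : Even (2*k-m) := Even.tsub (even_two_mul k) he
        rw [if_pos he, hp.neg_pow]
        ring
      · have hp : Odd (2*k-m) :=
          Nat.Even.sub_odd hmle (even_two_mul k) (Nat.not_even_iff_odd.1 he)
        rw [if_neg he, hp.neg_pow]
        ring
    rw [Finset.sum_congr rfl heo, evensum] at hAB
    have hterm : ∀ l ∈ Finset.range (k+1),
        ((2*k).choose (2*l) : ℝ) * (Real.cos θ ^ 2) ^ l * (Real.sin θ ^ 2) ^ (k-l) * W (2*l)
        = ((2*k).choose (2*l) : ℝ) * Real.cos θ ^ (2*l) * Real.sin θ ^(2*k-2*l) * W (2*l) := by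
      intro l hl
      have hlk : l ≤ k := by have := Finset.mem_range.1 hl; omega
      rw [← pow_mul, ← pow_mul, show 2*(k-l) = 2*k-2*l by omega]
    rw [Finset.sum_congr rfl hterm]
    have hexp : ∑ l ∈ Finset.range (k+1),
        2*(((2*k).choose (2*l) : ℝ) * Real.cos θ ^ (2*l) * Real.sin θ ^(2*k-2*l) * W (2*l))
        = 2 * ∑ l ∈ Finset.range (k+1),
          ((2*k).choose (2*l) : ℝ) * Real.cos θ ^ (2*l) * Real.sin θ ^(2*k-2*l) * W (2*l) := by
      rw [Finset.mul_sum]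
    rw [hexp] at hAB
    linarith
  have key : ∀ x : ℝ, 0 ≤ x → x ≤ 1 → ∑ l ∈ Finset.range (k+1),
      ((2*k).choose (2*l) : ℝ) * (1-x)^l * x^(k-l) * W (2*l) = T := by
    intro x h0 h1
    have hs : Real.sin (Real.arcsin (Real.sqrt x)) = Real.sqrt x :=
      Real.sin_arcsin (by linarith [Real.sqrt_nonneg x]) (by
        rw [show (1:ℝ) = Real.sqrt 1 by rw [Real.sqrt_one]]
        exact Real.sqrt_le_sqrt h1)
    have hs2 : Real.sin (Real.arcsin (Real.sqrt x)) ^ 2 = x := by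
      rw [hs, Real.sq_sqrt h0]
    have hc2 : Real.cos (Real.arcsin (Real.sqrt x)) ^ 2 = 1 - x := by
      rw [Real.cos_sq', hs2]
    have := step2 (Real.arcsin (Real.sqrt x))
    rw [hs2, hc2] at this
    exact this
  have hW2k : W (2*k) = T := by
    rw [hW, hT]
    refine integral_congr_ae (ae_of_all μ fun R => ?_)
    simp
  set H : ℝ → ℝ := fun x =>
    (∑ l ∈ Finset.range k, ((2*k).choose (2*l) : ℝ) * (1-x)^l * x^(k-l-1) * W (2*l))
      - (∑ i ∈ Finset.range k, (1-x)^i) * T with hH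
  have hxH : ∀ x : ℝ, 0 ≤ x → x ≤ 1 → x * H x = 0 := by
    intro x h0 h1
    have hkey := key x h0 h1
    rw [Finset.sum_range_succ, Nat.choose_self, Nat.sub_self, pow_zero, Nat.cast_one,
      one_mul, mul_one, hW2k] at hkey
    -- hkey : Σ_{l<k} term_l + (1-x)^k * T = T
    have hgeom : (∑ i ∈ Finset.range k, (1-x)^i) * x = 1 - (1-x)^k := by
      have h' := geom_sum_mul (1-x) k
      linear_combination -h'
    have hmulsum : x * (∑ l ∈ Finset.range k,
        ((2*k).choose (2*l) : ℝ) * (1-x)^l * x^(k-l-1) * W (2*l))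
        = ∑ l ∈ Finset.range k, ((2*k).choose (2*l) : ℝ) * (1-x)^l * x^(k-l) * W (2*l) := by
      rw [Finset.mul_sum]
      refine Finset.sum_congr rfl fun l hl => ?_
      have hlk : l < k := Finset.mem_range.1 hl
      have e : x^(k-l) = x^(k-l-1) * x := by
        rw [← pow_succ]
        congr 1
        omega
      rw [e]
      ring
    rw [hH]
    have : x * ((∑ l ∈ Finset.range k, ((2*k).choose (2*l) : ℝ) * (1-x)^l * x^(k-l-1) * W (2*l))
        - (∑ i ∈ Finset.range k, (1-x)^i) * T)
        = x * (∑ l ∈ Finset.range k, ((2*k).choose (2*l) : ℝ) * (1-x)^l * x^(k-l-1) * W (2*l))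
          - ((∑ i ∈ Finset.range k, (1-x)^i) * x) * T := by ring
    rw [this, hmulsum, hgeom]
    linarith
  have hHcont : Continuous H := by
    rw [hH]
    apply Continuous.sub
    · exact continuous_finset_sum _ fun l _ => by fun_prop
    · exact Continuous.mul (continuous_finset_sum _ fun i _ => by fun_prop) continuous_const
  have hH0 : H 0 = 0 := by
    have hseq : Filter.Tendsto (fun n : ℕ => H (1/(n+1))) Filter.atTop (nhds (H 0)) :=
      (hHcont.tendsto 0).comp tendsto_one_div_add_atTop_nhds_zero_nat
    have hzero : (fun n : ℕ => H (1/(n+1))) = fun _ : ℕ => (0:ℝ) := by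
      funext n
      have hx0 : (0:ℝ) < 1/(n+1) := by positivity
      have hx1 : (1:ℝ)/(n+1) ≤ 1 := by
        rw [div_le_one (by positivity)]
        linarith [Nat.cast_nonneg (α := ℝ) n]
      rcases mul_eq_zero.1 (hxH _ hx0.le hx1) with h | h
      · exact absurd h hx0.ne'
      · exact h
    rw [hzero] at hseq
    exact (tendsto_nhds_unique tendsto_const_nhds hseq).symm
  have hsum0 : (∑ l ∈ Finset.range k,
      ((2*k).choose (2*l) : ℝ) * (1-(0:ℝ))^l * (0:ℝ)^(k-l-1) * W (2*l))
      = ((2*k).choose (2*(k-1)) : ℝ) * W (2*(k-1)) := by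
    rw [Finset.sum_eq_single (k-1)]
    · rw [show k-(k-1)-1 = 0 by omega]
      simp
    · intro l hl hne
      have hlk : l < k := Finset.mem_range.1 hl
      rw [zero_pow (by omega : k-l-1 ≠ 0)]
      ring
    · intro h
      exact absurd (Finset.mem_range.2 (by omega)) h
  have hgeo0 : (∑ i ∈ Finset.range k, (1-(0:ℝ))^i) = (k:ℝ) := by simp
  have hchoose : ((2*k).choose (2*(k-1)) : ℝ) = (k : ℝ) * ((2*k : ℝ) - 1) := by
    have h2 : (2*k).choose (2*(k-1)) = (2*k).choose 2 := by
      rw [show 2*(k-1) = 2*k - 2 by omega]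
      exact Nat.choose_symm (by omega)
    have h3 : (2*k).choose 2 = k * (2*k-1) := by
      rw [Nat.choose_two_right]
      rw [show 2*k*(2*k-1) = 2*(k*(2*k-1)) by ring]
      exact Nat.mul_div_cancel_left _ (by norm_num)
    rw [h2, h3]
    push_cast [Nat.cast_sub (by omega : 1 ≤ 2*k)]
    ring
  have hWk1 : W (2*(k-1)) = ∫ R : OG d, (zv u R 0)^(2*k-2) * (zv u R j)^2 ∂μ := by
    simp only [hW]
    rw [show 2*(k-1) = 2*k-2 by omega, show 2*k-(2*k-2) = 2 by omega]
  have hH0' : (∑ l ∈ Finset.range k,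
      ((2*k).choose (2*l) : ℝ) * (1-(0:ℝ))^l * (0:ℝ)^(k-l-1) * W (2*l))
      - (∑ i ∈ Finset.range k, (1-(0:ℝ))^i) * T = 0 := hH0
  rw [hsum0, hgeo0, hchoose, hWk1] at hH0'
  have hkne : (k : ℝ) ≠ 0 := Nat.cast_ne_zero.2 (by omega)
  apply mul_left_cancel₀ hkne
  linear_combination hH0'

lemma Mk_le (u : Fin d → ℝ) (hu : sqNorm u = 1) (k : ℕ) :
    ∫ R : OG d, (zv u R 0)^(2*k) ∂μ ≤ ((2*k : ℝ)/d)^k := by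
  induction k with
  | zero => simp
  | succ n ih =>
    have hd : (0:ℝ) < d := by
      have : d ≠ 0 := NeZero.ne d
      have : 0 < d := Nat.pos_of_ne_zero this
      exact_mod_cast this
    have hd1 : (1:ℝ) ≤ d := by
      have : 1 ≤ d := Nat.one_le_iff_ne_zero.2 (NeZero.ne d)
      exact_mod_cast this
    set T := ∫ R : OG d, (zv u R 0)^(2*(n+1)) ∂μ with hT
    set S := ∫ R : OG d, (zv u R 0)^(2*n) ∂μ with hS
    have hS_nonneg : 0 ≤ S := integral_nonneg fun R => (even_two_mul n).pow_nonneg _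
    have hT_nonneg : 0 ≤ T := integral_nonneg fun R => (even_two_mul (n+1)).pow_nonneg _
    set a : ℝ := 2*((n:ℝ)+1) - 1 with ha
    have ha1 : (1:ℝ) ≤ a := by
      rw [ha]
      have : (0:ℝ) ≤ (n:ℝ) := Nat.cast_nonneg n
      linarith
    have ha0 : a ≠ 0 := by linarith
    have hrel : S = T + ((d:ℝ) - 1) * (T / a) := by
      have h1 : S = ∫ R : OG d, (zv u R 0)^(2*n) * sqNorm (zv u R) ∂μ := by
        rw [hS]
        refine integral_congr_ae (ae_of_all μ fun R => ?_)
        show (zv u R 0)^(2*n) = (zv u R 0)^(2*n) * sqNorm (zv u R)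
        rw [zv_sqNorm hu R, mul_one]
      have h2 : ∀ R : OG d, (zv u R 0)^(2*n) * sqNorm (zv u R)
          = ∑ l, (zv u R 0)^(2*n) * (zv u R l)^2 := by
        intro R
        unfold sqNorm
        rw [Finset.mul_sum]
      rw [h1, integral_congr_ae (ae_of_all μ h2),
        integral_finset_sum _ (fun l _ => zv_int u hu 0 l (2*n) 2),
        ← Finset.add_sum_erase _ _ (Finset.mem_univ (0 : Fin d))]
      have hfirst : ∫ R : OG d, (zv u R 0)^(2*n) * (zv u R 0)^2 ∂μ = T := by
        rw [hT]
        refine integral_congr_ae (ae_of_all μ fun R => ?_)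
        show (zv u R 0)^(2*n) * (zv u R 0)^2 = (zv u R 0)^(2*(n+1))
        rw [← pow_add]
        congr 1
      have hterm : ∀ l ∈ Finset.univ.erase (0:Fin d),
          ∫ R : OG d, (zv u R 0)^(2*n) * (zv u R l)^2 ∂μ = T / a := by
        intro l hl
        have hl0 : (0 : Fin d) ≠ l := Ne.symm (Finset.mem_erase.1 hl).1
        have hr := ratio (μ := μ) u hu hl0 (k := n+1) (by omega)
        rw [show 2*(n+1)-2 = 2*n by omega] at hr
        rw [eq_div_iff ha0]
        have hcast : ((2*(n+1) : ℕ) : ℝ) - 1 = a := by push_cast [ha]; ring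
        rw [mul_comm]
        rw [← hcast]
        convert hr using 3
        push_cast
        ring
      rw [Finset.sum_congr rfl hterm, Finset.sum_const,
        Finset.card_erase_of_mem (Finset.mem_univ _), Finset.card_univ, Fintype.card_fin,
        hfirst, nsmul_eq_mul]
      have : ((d - 1 : ℕ) : ℝ) = (d:ℝ) - 1 := by
        rw [Nat.cast_sub (Nat.one_le_iff_ne_zero.2 (NeZero.ne d))]
        simp
      rw [this]
    have h5 : a * S = (a + (d:ℝ) - 1) * T := by
      have e : a * (((d:ℝ)-1) * (T/a)) = ((d:ℝ)-1)*T := by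
        field_simp
      calc a * S = a*T + a*(((d:ℝ)-1)*(T/a)) := by rw [hrel]; ring
      _ = a*T + ((d:ℝ)-1)*T := by rw [e]
      _ = (a + (d:ℝ) -1)*T := by ring
    have hbound : T ≤ ((a+1)/(d:ℝ)) * S := by
      rw [div_mul_eq_mul_div, le_div_iff₀ hd]
      nlinarith [h5, hS_nonneg, hT_nonneg]
    have hcast2 : ((2*(n+1) : ℕ) : ℝ) = a + 1 := by push_cast [ha]; ring
    calc T ≤ ((a+1)/(d:ℝ)) * S := hbound
    _ ≤ ((a+1)/(d:ℝ)) * ((2*n : ℝ)/d)^n := by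
      apply mul_le_mul_of_nonneg_left ih
      apply div_nonneg (by linarith) (le_of_lt hd)
    _ ≤ ((a+1)/(d:ℝ)) * ((a+1)/(d:ℝ))^n := by
      apply mul_le_mul_of_nonneg_left
      · apply pow_le_pow_left₀ (by positivity)
        gcongr
        rw [ha]
        have : (0:ℝ) ≤ (n:ℝ) := Nat.cast_nonneg n
        linarith
      · apply div_nonneg (by linarith) (le_of_lt hd)
    _ = ((a+1)/(d:ℝ))^(n+1) := (pow_succ' _ _).symm
    _ = (2 * ((n+1 : ℕ) : ℝ) / (d:ℝ))^(n+1) := by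
      congr 2
      rw [ha]
      push_cast
      ring

lemma moment_le (u v : Fin d → ℝ) (hu : sqNorm u = 1) (hv : sqNorm v = 1) (k : ℕ) :
    ∫ R : OG d, (ip ((R : Matrix (Fin d) (Fin d) ℝ).mulVec u) v) ^ (2*k) ∂μ
      ≤ ((2*k : ℝ)/d)^k := by
  rw [ipv_inv u v hv (2*k)]
  exact Mk_le u hu k

end Ratio
section Pair
set_option linter.unusedSectionVars false
set_option synthInstance.maxHeartbeats 1000000
set_option maxHeartbeats 1000000
variable {d : ℕ} [NeZero d] {μ : Measure (OG d)} [μ.IsHaarMeasure] [IsProbabilityMeasure μ]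
  {N : ℕ}

lemma map_pair (i j : Fin N) (hij : i ≠ j) :
    (Measure.pi fun _ : Fin N => μ).map (fun R => (R i, R j)) = μ.prod μ := by
  classical
  have hpr : Measurable fun R : Fin N → OG d => (R i, R j) :=
    (measurable_pi_apply i).prodMk (measurable_pi_apply j)
  refine (Measure.prod_eq (μ := μ) (ν := μ) fun s t hs ht => ?_).symm
  rw [Measure.map_apply hpr (hs.prod ht)]
  have hset : (fun R : Fin N → OG d => (R i, R j)) ⁻¹' (s ×ˢ t)
      = Set.pi Set.univ (fun l => if l = i then s else if l = j then t else Set.univ) := by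
    ext R
    simp only [Set.mem_preimage, Set.mem_prod, Set.mem_pi, Set.mem_univ, true_implies]
    constructor
    · rintro ⟨h1, h2⟩ l
      by_cases hli : l = i
      · subst hli; simp [if_pos rfl, h1]
      · by_cases hlj : l = j
        · subst hlj; simp [if_neg hli, h2]
        · simp [if_neg hli, if_neg hlj]
    · intro h
      refine ⟨?_, ?_⟩
      · have := h i; simpa using this
      · have := h j; simpa [if_neg hij.symm] using this
  rw [hset, Measure.pi_pi]
  rw [← Finset.mul_prod_erase Finset.univ _ (Finset.mem_univ i)]
  have hj' : j ∈ Finset.univ.erase i := Finset.mem_erase.2 ⟨hij.symm, Finset.mem_univ j⟩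
  rw [← Finset.mul_prod_erase _ _ hj']
  have hrest : ∏ l ∈ (Finset.univ.erase i).erase j,
      μ (if l = i then s else if l = j then t else Set.univ) = 1 := by
    apply Finset.prod_eq_one
    intro l hl
    have hlj : l ≠ j := (Finset.mem_erase.1 hl).1
    have hli : l ≠ i := (Finset.mem_erase.1 (Finset.mem_erase.1 hl).2).1
    rw [if_neg hli, if_neg hlj]
    simp
  rw [hrest, if_pos rfl, if_neg hij.symm, if_pos rfl, mul_one]

lemma pair_moment (i j : Fin N) (hij : i ≠ j) (u v : Fin d → ℝ)
    (hu : sqNorm u = 1) (hv : sqNorm v = 1) (k : ℕ) :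
    ∫ R : Fin N → OG d,
        (ip (((R i) : Matrix (Fin d) (Fin d) ℝ).mulVec u)
          (((R j) : Matrix (Fin d) (Fin d) ℝ).mulVec v)) ^ (2*k)
        ∂(Measure.pi fun _ : Fin N => μ)
      ≤ ((2*k : ℝ)/d)^k := by
  classical
  set g : OG d × OG d → ℝ := fun p =>
    (ip (((p.2) : Matrix (Fin d) (Fin d) ℝ).mulVec u)
      (((p.1) : Matrix (Fin d) (Fin d) ℝ).mulVec v)) ^ (2*k) with hg
  have hgmeas : Measurable g := by
    apply Measurable.pow_const
    apply Finset.measurable_sum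
    intro l _
    exact ((measurable_z u l).comp measurable_snd).mul ((measurable_z v l).comp measurable_fst)
  have hpr : Measurable fun R : Fin N → OG d => (R j, R i) :=
    (measurable_pi_apply j).prodMk (measurable_pi_apply i)
  have hmap := map_pair (μ := μ) j i hij.symm
  have step1 : ∫ R : Fin N → OG d,
      (ip (((R i) : Matrix (Fin d) (Fin d) ℝ).mulVec u)
        (((R j) : Matrix (Fin d) (Fin d) ℝ).mulVec v)) ^ (2*k)
      ∂(Measure.pi fun _ : Fin N => μ) = ∫ p, g p ∂(μ.prod μ) := by
    rw [← hmap, integral_map hpr.aemeasurable hgmeas.aestronglyMeasurable]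
  rw [step1]
  have hgbdd : ∀ p : OG d × OG d, |g p| ≤ 1 := by
    intro p
    rw [hg, abs_pow]
    apply pow_le_one₀ (abs_nonneg _)
    exact abs_ip_le (by rw [sqNorm_mulVec p.2.2]; exact hu) (by rw [sqNorm_mulVec p.1.2]; exact hv)
  have hgint : Integrable g (μ.prod μ) := integrable_bdd _ hgmeas hgbdd
  rw [MeasureTheory.integral_prod g hgint]
  have hinner : ∀ x : OG d,
      ∫ y : OG d, g (x, y) ∂μ ≤ ((2*k : ℝ)/d)^k := by
    intro x
    exact moment_le u (((x : Matrix (Fin d) (Fin d) ℝ)).mulVec v) hu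
      (by rw [sqNorm_mulVec x.2]; exact hv) k
  calc ∫ x : OG d, ∫ y : OG d, g (x, y) ∂μ ∂μ
      ≤ ∫ _ : OG d, ((2*k : ℝ)/d)^k ∂μ := by
        apply integral_mono_of_nonneg
        · exact ae_of_all _ fun x => integral_nonneg fun y => by
            rw [hg]; exact (even_two_mul k).pow_nonneg _
        · exact integrable_const _
        · exact ae_of_all _ hinner
  _ = ((2*k : ℝ)/d)^k := by simp

end Pair
section Main
set_option linter.unusedSectionVars false
set_option synthInstance.maxHeartbeats 1000000
set_option maxHeartbeats 1000000

lemma ip_bilin {d N : ℕ} (A B : Finset (Fin N)) (w ω : Fin N → ℝ)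
    (F G : Fin N → Fin d → ℝ) :
    ip (∑ i ∈ A, w i • F i) (∑ j ∈ B, ω j • G j)
      = ∑ p ∈ A ×ˢ B, (w p.1 * ω p.2) * ip (F p.1) (G p.2) := by
  unfold ip
  have h1 : ∀ l, (∑ i ∈ A, w i • F i) l * (∑ j ∈ B, ω j • G j) l
      = ∑ i ∈ A, ∑ j ∈ B, (w i * ω j) * (F i l * G j l) := by
    intro l
    rw [Finset.sum_apply, Finset.sum_apply, Finset.sum_mul_sum]
    refine Finset.sum_congr rfl fun i _ => Finset.sum_congr rfl fun j _ => ?_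
    simp [Pi.smul_apply, smul_eq_mul]
    ring
  rw [Finset.sum_congr rfl fun l _ => h1 l]
  rw [Finset.sum_comm]
  rw [Finset.sum_product]
  refine Finset.sum_congr rfl fun i _ => ?_
  rw [Finset.sum_comm]
  refine Finset.sum_congr rfl fun j _ => ?_
  rw [Finset.mul_sum]

end Main
set_option linter.unusedSectionVars false
set_option synthInstance.maxHeartbeats 1000000
set_option maxHeartbeats 2000000

/-- **Prototype A sketch-to-sketch similarity, case (i): unrelated sketches are dissimilar.**
There are constants `C ≥ 1`, `c > 0` such that: for `N ≥ 2`, `d ≥ 1`, independent Haar-random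
orthogonal matrices `R₁,…,R_N`, disjoint module sets `A, Ā ⊆ {1,…,N}`, unit attribute vectors
and nonnegative weights each summing to `1`, the sketches `s = Σ_{i∈A} wᵢRᵢxᵢ` and
`s̄ = Σ_{i∈Ā} w̄ᵢRᵢx̄ᵢ` satisfy `Pr[ |⟨s, s̄⟩| > C·√(log N)/√d ] ≤ N^{−c}`. -/
theorem prototypeA_similarity_disjoint :
    ∃ C : ℝ, 1 ≤ C ∧ ∃ c : ℝ, 0 < c ∧
      ∀ (N d : ℕ), 2 ≤ N → 1 ≤ d →
      ∀ A Abar : Finset (Fin N), Disjoint A Abar →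
      ∀ x xbar : Fin N → Fin d → ℝ,
        (∀ i ∈ A, sqNorm (x i) = 1) → (∀ i ∈ Abar, sqNorm (xbar i) = 1) →
      ∀ w wbar : Fin N → ℝ, (∀ i, 0 ≤ w i) → (∀ i, 0 ≤ wbar i) →
        (∑ i ∈ A, w i) = 1 → (∑ i ∈ Abar, wbar i) = 1 →
      ∀ μ : Measure (Matrix.orthogonalGroup (Fin d) ℝ),
        μ.IsHaarMeasure → IsProbabilityMeasure μ →
        (Measure.pi fun _ : Fin N => μ)
            {R : Fin N → Matrix.orthogonalGroup (Fin d) ℝ |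
              C * Real.sqrt (Real.log N) / Real.sqrt d <
                |ip (∑ i ∈ A, w i • (R i : Matrix (Fin d) (Fin d) ℝ).mulVec (x i))
                  (∑ i ∈ Abar, wbar i • (R i : Matrix (Fin d) (Fin d) ℝ).mulVec (xbar i))|}
          ≤ ENNReal.ofReal ((N : ℝ) ^ (-c : ℝ)) := by
  classical
  refine ⟨4, by norm_num, 1, by norm_num, ?_⟩
  intro N d hN hd A Abar hdisj x xbar hx hxbar w wbar hw hwbar hsw hswbar μ hHaar hProb
  haveI := hHaar
  haveI := hProb
  haveI : NeZero d := ⟨by omega⟩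
  set π : Measure (Fin N → OG d) := Measure.pi fun _ : Fin N => μ with hπ
  haveI : IsProbabilityMeasure π := by
    constructor
    rw [hπ, Measure.pi_univ]
    simp
  have hN0 : (0:ℝ) < N := by positivity
  have hL : (0:ℝ) < Real.log N := Real.log_pos (by exact_mod_cast hN)
  have hL2 : Real.log 2 ≤ Real.log N := Real.log_le_log (by norm_num) (by exact_mod_cast hN)
  have hd0 : (0:ℝ) < d := by
    have : 0 < d := by omega
    exact_mod_cast this
  set L : ℝ := Real.log N with hLdef
  set k : ℕ := ⌈L⌉₊ with hk
  have hk1 : 1 ≤ k := Nat.one_le_iff_ne_zero.2 (by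
    have : 0 < k := Nat.ceil_pos.2 hL
    omega)
  have hkL : (k:ℝ) ≤ L + 1 := le_of_lt (Nat.ceil_lt_add_one hL.le)
  have hLk : L ≤ (k:ℝ) := Nat.le_ceil L
  set X : (Fin N → OG d) → ℝ := fun R =>
    ip (∑ i ∈ A, w i • (R i : Matrix (Fin d) (Fin d) ℝ).mulVec (x i))
      (∑ i ∈ Abar, wbar i • (R i : Matrix (Fin d) (Fin d) ℝ).mulVec (xbar i)) with hX
  set Y : Fin N × Fin N → (Fin N → OG d) → ℝ := fun p R =>
    ip ((R p.1 : Matrix (Fin d) (Fin d) ℝ).mulVec (x p.1))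
      ((R p.2 : Matrix (Fin d) (Fin d) ℝ).mulVec (xbar p.2)) with hY
  have hXsum : ∀ R, X R = ∑ p ∈ A ×ˢ Abar, (w p.1 * wbar p.2) * Y p R := by
    intro R
    rw [hX, hY]
    exact ip_bilin A Abar w wbar _ _
  have hωsum : ∑ p ∈ A ×ˢ Abar, w p.1 * wbar p.2 = 1 := by
    rw [Finset.sum_product]
    rw [show (∑ i ∈ A, ∑ j ∈ Abar, w i * wbar j) = (∑ i ∈ A, w i) * (∑ j ∈ Abar, wbar j) from
      (Finset.sum_mul_sum A Abar w wbar).symm]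
    rw [hsw, hswbar, mul_one]
  have hωnn : ∀ p ∈ A ×ˢ Abar, 0 ≤ w p.1 * wbar p.2 := fun p _ =>
    mul_nonneg (hw p.1) (hwbar p.2)
  have hYmeas : ∀ p, Measurable (Y p) := by
    intro p
    apply Finset.measurable_sum
    intro l _
    exact ((measurable_z (x p.1) l).comp (measurable_pi_apply p.1)).mul
      ((measurable_z (xbar p.2) l).comp (measurable_pi_apply p.2))
  have hYbdd : ∀ p ∈ A ×ˢ Abar, ∀ R, |Y p R| ≤ 1 := by
    intro p hp R
    have hp1 : p.1 ∈ A := (Finset.mem_product.1 hp).1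
    have hp2 : p.2 ∈ Abar := (Finset.mem_product.1 hp).2
    exact abs_ip_le (by rw [sqNorm_mulVec (R p.1).2]; exact hx p.1 hp1)
      (by rw [sqNorm_mulVec (R p.2).2]; exact hxbar p.2 hp2)
  have hYint : ∀ p ∈ A ×ˢ Abar, Integrable (fun R => (Y p R)^(2*k)) π := by
    intro p hp
    apply integrable_bdd π ((hYmeas p).pow_const (2*k)) (c := 1)
    intro R
    rw [abs_pow]
    exact pow_le_one₀ (abs_nonneg _) (hYbdd p hp R)
  have hXmeas : Measurable X := by
    have hXeq : X = fun R : Fin N → OG d => ∑ l,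
        (∑ i ∈ A, w i * ((R i : Matrix (Fin d) (Fin d) ℝ).mulVec (x i)) l)
        * (∑ j ∈ Abar, wbar j * ((R j : Matrix (Fin d) (Fin d) ℝ).mulVec (xbar j)) l) := by
      funext R
      rw [hX]
      unfold ip
      refine Finset.sum_congr rfl fun l _ => ?_
      rw [Finset.sum_apply, Finset.sum_apply]
      simp [smul_eq_mul]
    rw [hXeq]
    apply Finset.measurable_sum
    intro l _
    apply Measurable.mul
    · apply Finset.measurable_sum
      intro i _
      exact (((measurable_z (x i) l).comp (measurable_pi_apply i)).const_mul (w i))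
    · apply Finset.measurable_sum
      intro j _
      exact (((measurable_z (xbar j) l).comp (measurable_pi_apply j)).const_mul (wbar j))
  have hXbdd : ∀ R, |X R| ≤ 1 := by
    intro R
    rw [hXsum R]
    calc |∑ p ∈ A ×ˢ Abar, (w p.1 * wbar p.2) * Y p R|
        ≤ ∑ p ∈ A ×ˢ Abar, |(w p.1 * wbar p.2) * Y p R| := Finset.abs_sum_le_sum_abs _ _
    _ ≤ ∑ p ∈ A ×ˢ Abar, w p.1 * wbar p.2 := by
        apply Finset.sum_le_sum
        intro p hp
        rw [abs_mul, abs_of_nonneg (hωnn p hp)]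
        calc (w p.1 * wbar p.2) * |Y p R| ≤ (w p.1 * wbar p.2) * 1 :=
          mul_le_mul_of_nonneg_left (hYbdd p hp R) (hωnn p hp)
        _ = w p.1 * wbar p.2 := mul_one _
    _ = 1 := hωsum
  have hXint : Integrable (fun R => (X R)^(2*k)) π :=
    integrable_bdd π (hXmeas.pow_const (2*k)) (c := 1)
      (fun R => by rw [abs_pow]; exact pow_le_one₀ (abs_nonneg _) (hXbdd R))
  have hconv : ConvexOn ℝ Set.univ (fun s : ℝ => s^(2*k)) := Even.convexOn_pow (even_two_mul k)
  have hJen : ∀ R, (X R)^(2*k) ≤ ∑ p ∈ A ×ˢ Abar, (w p.1 * wbar p.2) * (Y p R)^(2*k) := by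
    intro R
    have h := hconv.map_sum_le hωnn hωsum (fun p _ => Set.mem_univ (Y p R))
    rw [hXsum R]
    simpa [smul_eq_mul] using h
  have hint2 : Integrable (fun R => ∑ p ∈ A ×ˢ Abar, (w p.1 * wbar p.2) * (Y p R)^(2*k)) π := by
    apply integrable_finset_sum
    intro p hp
    exact ((hYint p hp).const_mul _)
  have hM : ∫ R, (X R)^(2*k) ∂π ≤ ((2*k:ℝ)/d)^k := by
    calc ∫ R, (X R)^(2*k) ∂π
        ≤ ∫ R, ∑ p ∈ A ×ˢ Abar, (w p.1 * wbar p.2) * (Y p R)^(2*k) ∂π :=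
          integral_mono hXint hint2 hJen
    _ = ∑ p ∈ A ×ˢ Abar, (w p.1 * wbar p.2) * ∫ R, (Y p R)^(2*k) ∂π := by
        rw [integral_finset_sum _ (fun p hp => (hYint p hp).const_mul _)]
        exact Finset.sum_congr rfl fun p hp => integral_const_mul _ _
    _ ≤ ∑ p ∈ A ×ˢ Abar, (w p.1 * wbar p.2) * ((2*k:ℝ)/d)^k := by
        apply Finset.sum_le_sum
        intro p hp
        apply mul_le_mul_of_nonneg_left ?_ (hωnn p hp)
        have hp1 : p.1 ∈ A := (Finset.mem_product.1 hp).1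
        have hp2 : p.2 ∈ Abar := (Finset.mem_product.1 hp).2
        have hne : p.1 ≠ p.2 := by
          intro h
          exact (Finset.disjoint_left.1 hdisj hp1) (h ▸ hp2)
        exact pair_moment p.1 p.2 hne (x p.1) (xbar p.2) (hx p.1 hp1) (hxbar p.2 hp2) k
    _ = ((2*k:ℝ)/d)^k := by rw [← Finset.sum_mul, hωsum, one_mul]
  set t : ℝ := 4 * Real.sqrt L / Real.sqrt d with htdef
  have hsL : 0 < Real.sqrt L := Real.sqrt_pos.2 hL
  have hsd : 0 < Real.sqrt d := Real.sqrt_pos.2 hd0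
  have ht0 : 0 < t := by
    rw [htdef]
    exact div_pos (by linarith) hsd
  have ht2 : t^2 = 16 * L / d := by
    rw [htdef, div_pow, mul_pow, Real.sq_sqrt hL.le, Real.sq_sqrt hd0.le]
    norm_num
  have hsub : {R : Fin N → OG d | t < |X R|} ⊆ {R | t^(2*k) ≤ (X R)^(2*k)} := by
    intro R hR
    simp only [Set.mem_setOf_eq] at hR ⊢
    calc t^(2*k) ≤ |X R|^(2*k) := pow_le_pow_left₀ ht0.le hR.le _
    _ = (X R)^(2*k) := (even_two_mul k).pow_abs _
  have hMarkov := mul_meas_ge_le_integral_of_nonneg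
    (ae_of_all π fun R => (even_two_mul k).pow_nonneg (X R)) hXint (t^(2*k))
  have htk : 0 < t^(2*k) := pow_pos ht0 _
  have hmeasle : (π {R | t < |X R|}).toReal ≤ ((2*k:ℝ)/d)^k / t^(2*k) := by
    have h1 : (π {R | t < |X R|}).toReal ≤ (π {R | t^(2*k) ≤ (X R)^(2*k)}).toReal :=
      ENNReal.toReal_mono (measure_ne_top π _) (measure_mono hsub)
    have h2 : (π {R | t^(2*k) ≤ (X R)^(2*k)}).toReal ≤ (∫ R, (X R)^(2*k) ∂π)/t^(2*k) := by
      rw [le_div_iff₀ htk]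
      calc (π {R | t^(2*k) ≤ (X R)^(2*k)}).toReal * t^(2*k)
          = t^(2*k) * (π {R | t^(2*k) ≤ (X R)^(2*k)}).toReal := mul_comm _ _
      _ ≤ ∫ R, (X R)^(2*k) ∂π := hMarkov
    calc (π {R | t < |X R|}).toReal ≤ (∫ R, (X R)^(2*k) ∂π)/t^(2*k) := le_trans h1 h2
    _ ≤ ((2*k:ℝ)/d)^k / t^(2*k) := by gcongr
  have harith : ((2*k:ℝ)/d)^k / t^(2*k) ≤ (N:ℝ)^(-(1:ℝ)) := by
    have htk2 : t^(2*k) = (16*L/d)^k := by rw [pow_mul, ht2]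
    rw [htk2]
    have hquot : ((2*k:ℝ)/d)^k / (16*L/d)^k = ((k:ℝ)/(8*L))^k := by
      rw [← div_pow]
      congr 1
      field_simp
      ring
    rw [hquot]
    have hl2 : (0:ℝ) < Real.log 2 := Real.log_pos (by norm_num)
    have he : Real.exp 1 * k ≤ 8 * L := by
      have h1k : (k:ℝ) ≤ L + L/Real.log 2 := by
        have : (1:ℝ) ≤ L / Real.log 2 := (one_le_div hl2).2 hL2
        linarith
      have hexp : Real.exp 1 < 2.7182818286 := Real.exp_one_lt_d9
      have hexp0 : 0 < Real.exp 1 := Real.exp_pos 1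
      have hlog2 : 0.6931471803 < Real.log 2 := Real.log_two_gt_d9
      have hlog2' : Real.log 2 < 0.6931471808 := Real.log_two_lt_d9
      have hkey : Real.exp 1 * (Real.log 2 + 1) ≤ 8 * Real.log 2 := by nlinarith
      have hLL : L / Real.log 2 * Real.log 2 = L := div_mul_cancel₀ L hl2.ne'
      nlinarith [mul_le_mul_of_nonneg_left h1k hexp0.le,
        mul_pos hL (div_pos hL hl2)]
    have hfrac : (k:ℝ)/(8*L) ≤ Real.exp (-1) := by
      rw [Real.exp_neg, inv_eq_one_div, div_le_div_iff₀ (by positivity) (Real.exp_pos 1)]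
      calc (k:ℝ) * Real.exp 1 = Real.exp 1 * k := mul_comm _ _
      _ ≤ 8 * L := he
      _ = 1 * (8 * L) := (one_mul _).symm
    calc ((k:ℝ)/(8*L))^k ≤ (Real.exp (-1))^k :=
        pow_le_pow_left₀ (by positivity) hfrac k
    _ = Real.exp (-(k:ℝ)) := by
        rw [← Real.exp_nat_mul]
        congr 1
        ring
    _ ≤ Real.exp (-L) := Real.exp_le_exp.2 (by linarith)
    _ = (N:ℝ)^(-(1:ℝ)) := by
        rw [Real.rpow_neg_one, Real.exp_neg, hLdef, Real.exp_log hN0]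
  have hfinal : (π {R | t < |X R|}).toReal ≤ (N:ℝ)^(-(1:ℝ)) := le_trans hmeasle harith
  have heq : π {R | t < |X R|} = ENNReal.ofReal ((π {R | t < |X R|}).toReal) :=
    (ENNReal.ofReal_toReal (measure_ne_top π _)).symm
  show π {R | t < |X R|} ≤ ENNReal.ofReal ((N:ℝ)^(-(1:ℝ)))
  rw [heq]
  exact ENNReal.ofReal_le_ofReal hfinal
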